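/- Under the nonlinear fixed-point iteration setup, for any n ≥ 0 and k ≥ 1, the N×k matrix W with columns w_n, w_{n+1}, …, w_{n+k−1} satisfies ‖W‖ ≤ √((1+L)³/(1−L)) · ‖ε_n‖ in the operator (spectral) norm; the same bound holds for the N×k matrix W̃ with columns w̃_{n+j} = F̃ʲ(F̃ − I)² ε_n, j = 0,…,k−1. In particular these bounds are independent of k. -/

import Mathlib

open scoped Matrix Matrix.Norms.L2Operator


lemma col_bound {N k : ℕ} (A : Matrix (Fin N) (Fin k) ℂ) (c : Fin k → ℝ)
    (hc : ∀ j, 0 ≤ c j)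
    (h : ∀ j, ‖(WithLp.equiv 2 (Fin N → ℂ)).symm (fun p => A p j)‖ ≤ c j) :
    ‖A‖ ≤ Real.sqrt (∑ j, c j ^ 2) := by
  rw [Matrix.l2_opNorm_def]
  refine ContinuousLinearMap.opNorm_le_bound _ (Real.sqrt_nonneg _) fun y => ?_
  have key : (Matrix.toEuclideanLin A) y
      = ∑ j, (y j : ℂ) • (WithLp.equiv 2 (Fin N → ℂ)).symm (fun p => A p j) := by
    ext p
    simp only [Matrix.toEuclideanLin_apply, Matrix.mulVec, dotProduct]
    rw [WithLp.ofLp_sum, Finset.sum_apply]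
    show ∑ j, A p j * y j = ∑ j, y j * A p j
    exact Finset.sum_congr rfl fun j _ => mul_comm _ _
  simp only [LinearEquiv.trans_apply, LinearMap.coe_toContinuousLinearMap']
  rw [key]
  calc ‖∑ j, (y j : ℂ) • (WithLp.equiv 2 (Fin N → ℂ)).symm (fun p => A p j)‖
      ≤ ∑ j, ‖(y j : ℂ) • (WithLp.equiv 2 (Fin N → ℂ)).symm (fun p => A p j)‖ :=
        norm_sum_le _ _
    _ ≤ ∑ j, ‖y j‖ * c j := by
        refine Finset.sum_le_sum fun j _ => ?_
        rw [norm_smul]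
        exact mul_le_mul_of_nonneg_left (h j) (norm_nonneg _)
    _ ≤ Real.sqrt (∑ j, c j ^ 2) * ‖y‖ := by
        have cs := Finset.sum_mul_sq_le_sq_mul_sq Finset.univ (fun j => ‖y j‖) c
        have hnn : (0:ℝ) ≤ ∑ j, ‖y j‖ * c j :=
          Finset.sum_nonneg fun j _ => mul_nonneg (norm_nonneg _) (hc j)
        have hy : ‖y‖ = Real.sqrt (∑ j, ‖y j‖ ^ 2) := EuclideanSpace.norm_eq y
        rw [hy, ← Real.sqrt_mul (Finset.sum_nonneg fun j _ => sq_nonneg _)]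
        rw [← Real.sqrt_sq hnn]
        apply Real.sqrt_le_sqrt
        calc (∑ j, ‖y j‖ * c j) ^ 2 ≤ (∑ j, ‖y j‖ ^ 2) * ∑ j, c j ^ 2 := cs
          _ = (∑ j, c j ^ 2) * ∑ j, ‖y j‖ ^ 2 := mul_comm _ _

lemma equiv_symm_norm {N : ℕ} (v : EuclideanSpace ℂ (Fin N)) :
    ‖(WithLp.equiv 2 (Fin N → ℂ)).symm v‖ = ‖v‖ := rfl

set_option maxHeartbeats 1000000 in
/-- Under the nonlinear fixed-point iteration setup, for any `n ≥ 0` and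
`k ≥ 1`, the `N×k` matrix `W` with columns `w_n, …, w_{n+k−1}` satisfies
`‖W‖ ≤ √((1+L)³/(1−L))·‖ε_n‖` in the `l₂` operator (spectral) norm, and so does the
matrix `W̃` with columns `w̃_{n+j} = F̃ʲ(F̃ − I)² ε_n`; the bounds are independent of `k`. -/
theorem rre_W_matrix_norm_bound
    (N : ℕ) (hN : 1 ≤ N) (s : EuclideanSpace ℂ (Fin N)) (δ : ℝ) (hδ : 0 < δ)
    (L a : ℝ) (hL0 : 0 < L) (hL1 : L < 1) (ha : 0 < a)
    (f : EuclideanSpace ℂ (Fin N) → EuclideanSpace ℂ (Fin N)) (hfs : f s = s)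
    (hLip : ∀ x y : EuclideanSpace ℂ (Fin N),
      ‖x - s‖ ≤ δ → ‖y - s‖ ≤ δ → ‖f x - f y‖ ≤ L * ‖x - y‖)
    (F : EuclideanSpace ℂ (Fin N) →L[ℂ] EuclideanSpace ℂ (Fin N)) (hF : ‖F‖ ≤ L)
    (hTay : ∀ x : EuclideanSpace ℂ (Fin N),
      ‖x - s‖ ≤ δ → ‖f x - s - F (x - s)‖ ≤ a * ‖x - s‖ ^ 2)
    (x : ℕ → EuclideanSpace ℂ (Fin N)) (hx0 : ‖x 0 - s‖ ≤ δ)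
    (hxit : ∀ m, x (m + 1) = f (x m)) :
    ∀ n k : ℕ, 1 ≤ k →
      ‖(Matrix.of fun (p : Fin N) (j : Fin k) =>
          ((x (n + (j : ℕ) + 2) - x (n + (j : ℕ) + 1))
            - (x (n + (j : ℕ) + 1) - x (n + (j : ℕ)))) p)‖ ≤
        Real.sqrt ((1 + L) ^ 3 / (1 - L)) * ‖x n - s‖ ∧
      ‖(Matrix.of fun (p : Fin N) (j : Fin k) =>
          (((F ^ (j : ℕ) * (F - 1) ^ 2 : EuclideanSpace ℂ (Fin N) →L[ℂ] EuclideanSpace ℂ (Fin N))) (x n - s)) p)‖ ≤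
        Real.sqrt ((1 + L) ^ 3 / (1 - L)) * ‖x n - s‖ := by
  intro n k hk
  have h1L : (0:ℝ) < 1 - L := by linarith
  have h1L' : (0:ℝ) < 1 + L := by linarith
  -- all iterates stay in the ball
  have hball : ∀ m, ‖x m - s‖ ≤ δ := by
    intro m
    induction m with
    | zero => exact hx0
    | succ m ih =>
      have h0 : ‖s - s‖ ≤ δ := by simp [hδ.le]
      have : ‖x (m+1) - s‖ ≤ L * ‖x m - s‖ := by
        rw [hxit m]
        calc ‖f (x m) - s‖ = ‖f (x m) - f s‖ := by rw [hfs]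
          _ ≤ L * ‖x m - s‖ := hLip _ _ ih h0
      calc ‖x (m+1) - s‖ ≤ L * ‖x m - s‖ := this
        _ ≤ 1 * δ := mul_le_mul hL1.le ih (norm_nonneg _) zero_le_one
        _ = δ := one_mul δ
  have hstep : ∀ m, ‖x (m+1) - s‖ ≤ L * ‖x m - s‖ := by
    intro m
    rw [hxit m]
    calc ‖f (x m) - s‖ = ‖f (x m) - f s‖ := by rw [hfs]
      _ ≤ L * ‖x m - s‖ := hLip _ _ (hball m) (by simp [hδ.le])
  have hiter : ∀ i, ‖x (n+i) - s‖ ≤ L ^ i * ‖x n - s‖ := by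
    intro i
    induction i with
    | zero => simp
    | succ i ih =>
      calc ‖x (n+(i+1)) - s‖ = ‖x ((n+i)+1) - s‖ := by ring_nf
        _ ≤ L * ‖x (n+i) - s‖ := hstep _
        _ ≤ L * (L ^ i * ‖x n - s‖) := by
            exact mul_le_mul_of_nonneg_left ih hL0.le
        _ = L ^ (i+1) * ‖x n - s‖ := by ring
  set E : ℝ := ‖x n - s‖ with hE
  have hE0 : 0 ≤ E := norm_nonneg _
  set c : Fin k → ℝ := fun j => (1+L)^2 * L ^ (j:ℕ) * E with hc
  have hcnn : ∀ j, 0 ≤ c j := fun j => by positivity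
  -- common sqrt bound
  have hsum : Real.sqrt (∑ j, c j ^ 2) ≤ Real.sqrt ((1 + L) ^ 3 / (1 - L)) * E := by
    have hgeo : (∑ j : Fin k, (L^2) ^ (j:ℕ)) ≤ 1 / (1 - L^2) := by
      rw [Fin.sum_univ_eq_sum_range]
      have hne : L^2 ≠ 1 := by nlinarith
      have h2 : (0:ℝ) < 1 - L^2 := by nlinarith
      have h3 : ((L^2)^k - 1)/(L^2 - 1) = (1 - (L^2)^k)/(1 - L^2) := by
        rw [← neg_sub (1:ℝ) ((L^2)^k), ← neg_sub (1:ℝ) (L^2), neg_div_neg_eq]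
      rw [geom_sum_eq hne, h3, div_le_div_iff₀ h2 h2]
      have : (0:ℝ) ≤ (L^2) ^ k := by positivity
      nlinarith
    have hsum2 : (∑ j, c j ^ 2) ≤ ((1 + L) ^ 3 / (1 - L)) * E ^ 2 := by
      have : (∑ j, c j ^ 2) = (1+L)^4 * E^2 * (∑ j : Fin k, (L^2) ^ (j:ℕ)) := by
        rw [Finset.mul_sum]
        refine Finset.sum_congr rfl fun j _ => ?_
        simp only [hc]
        ring
      rw [this]
      have hle : (1+L)^4 * E^2 * (∑ j : Fin k, (L^2) ^ (j:ℕ))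
          ≤ (1+L)^4 * E^2 * (1 / (1 - L^2)) :=
        mul_le_mul_of_nonneg_left hgeo (by positivity)
      refine hle.trans_eq ?_
      have h2 : (1:ℝ) - L^2 ≠ 0 := by nlinarith
      field_simp
      ring
    calc Real.sqrt (∑ j, c j ^ 2) ≤ Real.sqrt (((1 + L) ^ 3 / (1 - L)) * E ^ 2) :=
          Real.sqrt_le_sqrt hsum2
      _ = Real.sqrt ((1 + L) ^ 3 / (1 - L)) * E := by
          rw [Real.sqrt_mul (by positivity), Real.sqrt_sq hE0]
  constructor
  · refine le_trans (col_bound _ c hcnn fun j => ?_) hsum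
    simp only [Matrix.of_apply]
    rw [equiv_symm_norm]
    have e2 := hiter ((j:ℕ)+2)
    have e1 := hiter ((j:ℕ)+1)
    have e0 := hiter (j:ℕ)
    have hv : (x (n + (j:ℕ) + 2) - x (n + (j:ℕ) + 1)) - (x (n + (j:ℕ) + 1) - x (n + (j:ℕ)))
        = ((x (n + ((j:ℕ)+2)) - s) - (x (n + ((j:ℕ)+1)) - s))
          - ((x (n + ((j:ℕ)+1)) - s) - (x (n + (j:ℕ)) - s)) := by
      have h2 : n + (j:ℕ) + 2 = n + ((j:ℕ)+2) := by ring
      have h1 : n + (j:ℕ) + 1 = n + ((j:ℕ)+1) := by ring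
      rw [h2, h1]; abel
    rw [hv]
    calc ‖_ - _‖ ≤ ‖(x (n + ((j:ℕ)+2)) - s) - (x (n + ((j:ℕ)+1)) - s)‖
          + ‖(x (n + ((j:ℕ)+1)) - s) - (x (n + (j:ℕ)) - s)‖ := norm_sub_le _ _
      _ ≤ (‖x (n + ((j:ℕ)+2)) - s‖ + ‖x (n + ((j:ℕ)+1)) - s‖)
          + (‖x (n + ((j:ℕ)+1)) - s‖ + ‖x (n + (j:ℕ)) - s‖) :=
            add_le_add (norm_sub_le _ _) (norm_sub_le _ _)
      _ ≤ (L^((j:ℕ)+2) * E + L^((j:ℕ)+1) * E) + (L^((j:ℕ)+1) * E + L^(j:ℕ) * E) := by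
            exact add_le_add (add_le_add e2 e1) (add_le_add e1 e0)
      _ = c j := by simp only [hc]; ring
  · refine le_trans (col_bound _ c hcnn fun j => ?_) hsum
    simp only [Matrix.of_apply]
    rw [equiv_symm_norm]
    have hone : ‖(1 : EuclideanSpace ℂ (Fin N) →L[ℂ] EuclideanSpace ℂ (Fin N))‖ ≤ 1 :=
      ContinuousLinearMap.norm_id_le
    have hpow : ∀ i : ℕ, ‖F ^ i‖ ≤ L ^ i := by
      intro i
      induction i with
      | zero =>
        rw [pow_zero, pow_zero]; exact hone
      | succ i ih =>
        calc ‖F ^ (i+1)‖ = ‖F ^ i * F‖ := by rw [pow_succ]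
          _ ≤ ‖F ^ i‖ * ‖F‖ := norm_mul_le _ _
          _ ≤ L ^ i * L := mul_le_mul ih hF (norm_nonneg _) (pow_nonneg hL0.le i)
          _ = L ^ (i+1) := by ring
    have hF1 : ‖F - 1‖ ≤ 1 + L := by
      calc ‖F - 1‖ ≤ ‖F‖ + ‖(1 : EuclideanSpace ℂ (Fin N) →L[ℂ] EuclideanSpace ℂ (Fin N))‖ :=
            norm_sub_le _ _
        _ ≤ L + 1 := add_le_add hF hone
        _ = 1 + L := by ring
    have hop : ‖(F ^ (j:ℕ) * (F - 1) ^ 2 : EuclideanSpace ℂ (Fin N) →L[ℂ] EuclideanSpace ℂ (Fin N))‖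
        ≤ L ^ (j:ℕ) * (1+L)^2 := by
      calc ‖F ^ (j:ℕ) * (F - 1) ^ 2‖ ≤ ‖F ^ (j:ℕ)‖ * ‖(F - 1)^2‖ := norm_mul_le _ _
        _ ≤ L ^ (j:ℕ) * (1+L)^2 := by
            refine mul_le_mul (hpow _) ?_ (norm_nonneg _) (pow_nonneg hL0.le _)
            calc ‖(F-1)^2‖ = ‖(F-1) * (F-1)‖ := by rw [sq]
              _ ≤ ‖F-1‖ * ‖F-1‖ := norm_mul_le _ _
              _ ≤ (1+L) * (1+L) :=
                  mul_le_mul hF1 hF1 (norm_nonneg _) h1L'.le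
              _ = (1+L)^2 := by ring
    calc ‖(F ^ (j:ℕ) * (F - 1) ^ 2 : EuclideanSpace ℂ (Fin N) →L[ℂ] EuclideanSpace ℂ (Fin N)) (x n - s)‖
        ≤ ‖(F ^ (j:ℕ) * (F - 1) ^ 2 : EuclideanSpace ℂ (Fin N) →L[ℂ] EuclideanSpace ℂ (Fin N))‖ * E :=
          ContinuousLinearMap.le_opNorm _ _
      _ ≤ (L ^ (j:ℕ) * (1+L)^2) * E := mul_le_mul_of_nonneg_right hop hE0
      _ = c j := by simp only [hc]; ring
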